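/- Let M be a martingale of finite variation with M(0)=0, and let g be a bounded predictable process. Then the SDE R(t) = 1 + ∫₀ᵗ R(s−)(g(s) − 1) dM(s) has a unique solution given by the stochastic exponential, and when M(t) = N(t) − ∫₀ᵗ λ(s) ds for a counting process N with intensity λ, the solution is R(t) = exp(−∫₀ᵗ (g(s)−1) λ(s) ds) · ∏_{s ≤ t, ΔN(s)=1} g(s). -/

import Mathlib

open MeasureTheory intervalIntegral Set
open Filter Function Topology

section LRSDEHelpers

lemma abs_exp_sub_exp_le (u v : ℝ) :
    |Real.exp u - Real.exp v| ≤ max (Real.exp u) (Real.exp v) * |u - v| := by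
  wlog huv : v ≤ u generalizing u v
  · rw [abs_sub_comm, max_comm, abs_sub_comm u v]; exact this _ _ (le_of_not_ge huv)
  rw [abs_of_nonneg (sub_nonneg.2 (Real.exp_le_exp.2 huv)), abs_of_nonneg (sub_nonneg.2 huv)]
  have h1 : 1 + (v - u) ≤ Real.exp (v - u) := by linarith [Real.add_one_le_exp (v - u)]
  have h2 : Real.exp v = Real.exp u * Real.exp (v - u) := by rw [← Real.exp_add]; ring_nf
  nlinarith [Real.exp_pos u, le_max_left (Real.exp u) (Real.exp v), sub_nonneg.2 huv]

theorem ftc_exp {h : ℝ → ℝ} (hint : ∀ a b, IntervalIntegrable h volume a b) {a b : ℝ}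
    (hab : a ≤ b) :
    Real.exp (-(∫ s in (0:ℝ)..b, h s)) - Real.exp (-(∫ s in (0:ℝ)..a, h s))
      = -∫ s in a..b, Real.exp (-(∫ u in (0:ℝ)..s, h u)) * h s := by
  set c := min a 0 with hc
  set d := max b 0 with hd
  have hcd : c ≤ d := le_trans (min_le_right a 0) (le_max_right b 0)
  have haIcc : a ∈ Icc c d := ⟨min_le_left a 0, hab.trans (le_max_left b 0)⟩
  have hbIcc : b ∈ Icc c d := ⟨le_trans (min_le_left a 0) hab, le_max_left b 0⟩
  have h0Icc : (0:ℝ) ∈ Icc c d := ⟨min_le_right a 0, le_max_right b 0⟩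
  have subIcc : ∀ x ∈ Icc c d, uIcc 0 x ⊆ Icc c d := fun x hx => uIcc_subset_Icc h0Icc hx
  have hIcc : IntegrableOn h (Icc c d) volume :=
    (intervalIntegrable_iff_integrableOn_Icc_of_le hcd).1 (hint c d)
  set H : ℝ → ℝ := (Icc c d).indicator h with hHdef
  have Hint : Integrable H volume := hIcc.integrable_indicator measurableSet_Icc
  have Feq : ∀ x ∈ Icc c d, (∫ s in (0:ℝ)..x, H s) = ∫ s in (0:ℝ)..x, h s := fun x hx =>
    intervalIntegral.integral_congr (fun s hs => indicator_of_mem (subIcc x hx hs) h)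
  set F : ℝ → ℝ := fun x => ∫ s in (0:ℝ)..x, H s with hFdef
  have hFcont : Continuous F := Hint.continuous_primitive 0
  set M₀ : ℝ := ∫ x, |H x| with hM₀
  have hM₀nonneg : 0 ≤ M₀ := integral_nonneg (fun x => abs_nonneg _)
  have FxB : ∀ x, |F x| ≤ M₀ := by
    intro x
    calc |F x| ≤ ∫ s in Set.uIoc 0 x, |H s| := by
          simpa [Real.norm_eq_abs] using intervalIntegral.norm_integral_le_integral_norm_uIoc
            (f := H) (a := 0) (b := x) (μ := volume)
      _ ≤ M₀ := setIntegral_le_integral Hint.abs (Eventually.of_forall fun x => abs_nonneg _)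
  have hchoice : ∀ n : ℕ, ∃ φ : ℝ → ℝ, HasCompactSupport φ ∧
      (∫ x, ‖H x - φ x‖) ≤ ((n:ℝ)+1)⁻¹ ∧ Continuous φ ∧ Integrable φ volume := fun n =>
    Hint.exists_hasCompactSupport_integral_sub_le (by positivity : (0:ℝ) < ((n:ℝ)+1)⁻¹)
  choose φ _ hφsub hφcont hφint using hchoice
  set Fn : ℕ → ℝ → ℝ := fun n x => ∫ s in (0:ℝ)..x, φ n s with hFn
  have hFn_diff : ∀ n x, |Fn n x - F x| ≤ ((n:ℝ)+1)⁻¹ := by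
    intro n x
    have heq : Fn n x - F x = ∫ s in (0:ℝ)..x, (φ n s - H s) := by
      rw [intervalIntegral.integral_sub ((hφint n).intervalIntegrable) Hint.intervalIntegrable]
    rw [heq]
    calc |∫ s in (0:ℝ)..x, (φ n s - H s)| ≤ ∫ s in Set.uIoc 0 x, |φ n s - H s| := by
          simpa [Real.norm_eq_abs] using intervalIntegral.norm_integral_le_integral_norm_uIoc
            (f := fun s => φ n s - H s) (a := 0) (b := x) (μ := volume)
      _ ≤ ∫ s, |φ n s - H s| := setIntegral_le_integral ((hφint n).sub Hint).abs
            (Eventually.of_forall fun x => abs_nonneg _)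
      _ = ∫ s, ‖H s - φ n s‖ := by
          congr 1; funext s; rw [Real.norm_eq_abs, abs_sub_comm]
      _ ≤ ((n:ℝ)+1)⁻¹ := hφsub n
  have hinvle1 : ∀ n : ℕ, ((n:ℝ)+1)⁻¹ ≤ 1 := by
    intro n
    rw [inv_le_one_iff₀]; right; linarith [Nat.cast_nonneg (α := ℝ) n]
  have hinvnonneg : ∀ n : ℕ, (0:ℝ) ≤ ((n:ℝ)+1)⁻¹ := fun n => by positivity
  have hFnB : ∀ n x, |Fn n x| ≤ M₀ + 1 := by
    intro n x
    calc |Fn n x| ≤ |Fn n x - F x| + |F x| := by simpa using abs_add_le (Fn n x - F x) (F x)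
      _ ≤ ((n:ℝ)+1)⁻¹ + M₀ := add_le_add (hFn_diff n x) (FxB x)
      _ ≤ M₀ + 1 := by linarith [hinvle1 n]
  set B : ℝ := Real.exp (M₀ + 1) with hB
  have hBpos : 0 < B := Real.exp_pos _
  have hGnB : ∀ n x, Real.exp (-(Fn n x)) ≤ B := fun n x =>
    Real.exp_le_exp.2 (by linarith [(abs_le.1 (hFnB n x)).1])
  have hGB : ∀ x, Real.exp (-(F x)) ≤ B := fun x =>
    Real.exp_le_exp.2 (by linarith [(abs_le.1 (FxB x)).1, hinvle1 0])
  have hFncont : ∀ n, Continuous (Fn n) := fun n =>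
    intervalIntegral.continuous_primitive (fun a b => (hφint n).intervalIntegrable) 0
  have hFnderiv : ∀ n x, HasDerivAt (Fn n) (φ n x) x := fun n x =>
    intervalIntegral.integral_hasDerivAt_right ((hφint n).intervalIntegrable)
      ((hφcont n).stronglyMeasurableAtFilter _ _) (hφcont n).continuousAt
  have hFTCn : ∀ n, Real.exp (-(Fn n b)) - Real.exp (-(Fn n a))
      = -∫ s in a..b, Real.exp (-(Fn n s)) * φ n s := by
    intro n
    have hcont : Continuous fun s => Real.exp (-(Fn n s)) * (-(φ n s)) :=
      (Real.continuous_exp.comp (hFncont n).neg).mul (hφcont n).neg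
    have hFTC := intervalIntegral.integral_eq_sub_of_hasDerivAt
      (f := fun y => Real.exp (-(Fn n y)))
      (f' := fun x => Real.exp (-(Fn n x)) * (-(φ n x)))
      (fun x _ => ((hFnderiv n x).neg).exp) (hcont.intervalIntegrable a b)
    rw [← hFTC]
    rw [← intervalIntegral.integral_neg]
    congr 1; funext s; ring
  -- convergence of endpoints
  have tendsto_inv : Tendsto (fun n : ℕ => ((n:ℝ)+1)⁻¹) atTop (𝓝 0) := by
    exact tendsto_one_div_add_atTop_nhds_zero_nat.congr (fun n => one_div _)
  have hFnab : ∀ x, Tendsto (fun n => Fn n x) atTop (𝓝 (F x)) := by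
    intro x
    rw [tendsto_iff_dist_tendsto_zero]
    refine squeeze_zero (fun n => dist_nonneg) (fun n => ?_) tendsto_inv
    simpa [Real.dist_eq] using hFn_diff n x
  have hGb : Tendsto (fun n => Real.exp (-(Fn n b))) atTop (𝓝 (Real.exp (-(F b)))) :=
    (Real.continuous_exp.tendsto _).comp ((hFnab b).neg)
  have hGa : Tendsto (fun n => Real.exp (-(Fn n a))) atTop (𝓝 (Real.exp (-(F a)))) :=
    (Real.continuous_exp.tendsto _).comp ((hFnab a).neg)
  -- integrability of limit integrand
  have hGH_int : Integrable (fun s => Real.exp (-(F s)) * H s) volume := by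
    refine Integrable.mono' (Hint.abs.const_mul B)
      (((Real.continuous_exp.comp hFcont.neg).aestronglyMeasurable).mul Hint.aestronglyMeasurable)
      (Eventually.of_forall fun x => ?_)
    rw [Real.norm_eq_abs, abs_mul, abs_of_nonneg (Real.exp_nonneg _)]
    exact mul_le_mul_of_nonneg_right (hGB x) (abs_nonneg _)
  have hGH_ii : IntervalIntegrable (fun s => Real.exp (-(F s)) * H s) volume a b :=
    hGH_int.intervalIntegrable
  -- key quantitative bound
  have key : ∀ n, |(∫ s in a..b, Real.exp (-(Fn n s)) * φ n s)
      - ∫ s in a..b, Real.exp (-(F s)) * H s| ≤ B * ((n:ℝ)+1)⁻¹ * (1 + M₀) := by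
    intro n
    have hii1 : IntervalIntegrable (fun s => Real.exp (-(Fn n s)) * φ n s) volume a b :=
      ((Real.continuous_exp.comp (hFncont n).neg).mul (hφcont n)).intervalIntegrable a b
    have hptwise : ∀ s, |Real.exp (-(Fn n s)) * φ n s - Real.exp (-(F s)) * H s|
        ≤ B * |φ n s - H s| + B * ((n:ℝ)+1)⁻¹ * |H s| := by
      intro s
      have hsplit : Real.exp (-(Fn n s)) * φ n s - Real.exp (-(F s)) * H s
          = Real.exp (-(Fn n s)) * (φ n s - H s)
            + (Real.exp (-(Fn n s)) - Real.exp (-(F s))) * H s := by ring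
      rw [hsplit]
      have h1 : |Real.exp (-(Fn n s)) * (φ n s - H s)| ≤ B * |φ n s - H s| := by
        rw [abs_mul, abs_of_nonneg (Real.exp_nonneg _)]
        exact mul_le_mul_of_nonneg_right (hGnB n s) (abs_nonneg _)
      have h2 : |(Real.exp (-(Fn n s)) - Real.exp (-(F s))) * H s|
          ≤ B * ((n:ℝ)+1)⁻¹ * |H s| := by
        rw [abs_mul]
        refine mul_le_mul_of_nonneg_right ?_ (abs_nonneg _)
        calc |Real.exp (-(Fn n s)) - Real.exp (-(F s))|
            ≤ max (Real.exp (-(Fn n s))) (Real.exp (-(F s))) * |(-(Fn n s)) - (-(F s))| :=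
              abs_exp_sub_exp_le _ _
          _ ≤ B * ((n:ℝ)+1)⁻¹ := by
              refine mul_le_mul (max_le (hGnB n s) (hGB s)) ?_ (abs_nonneg _) hBpos.le
              rw [show (-(Fn n s)) - (-(F s)) = -(Fn n s - F s) by ring, abs_neg]
              exact hFn_diff n s
      calc _ ≤ |Real.exp (-(Fn n s)) * (φ n s - H s)|
            + |(Real.exp (-(Fn n s)) - Real.exp (-(F s))) * H s| := abs_add_le _ _
        _ ≤ _ := add_le_add h1 h2
    have hW_ii : IntervalIntegrable
        (fun s => B * |φ n s - H s| + B * ((n:ℝ)+1)⁻¹ * |H s|) volume a b :=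
      ((((hφint n).sub Hint).abs.const_mul B).add
        (Hint.abs.const_mul (B * ((n:ℝ)+1)⁻¹))).intervalIntegrable
    have int1 : (∫ s in a..b, |φ n s - H s|) ≤ ((n:ℝ)+1)⁻¹ := by
      rw [intervalIntegral.integral_of_le hab]
      calc (∫ s in Ioc a b, |φ n s - H s|)
          ≤ ∫ s, |φ n s - H s| := setIntegral_le_integral ((hφint n).sub Hint).abs
            (Eventually.of_forall fun x => abs_nonneg _)
        _ = ∫ s, ‖H s - φ n s‖ := by
            congr 1; funext s; rw [Real.norm_eq_abs, abs_sub_comm]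
        _ ≤ ((n:ℝ)+1)⁻¹ := hφsub n
    have int2 : (∫ s in a..b, |H s|) ≤ M₀ := by
      rw [intervalIntegral.integral_of_le hab]
      exact setIntegral_le_integral Hint.abs (Eventually.of_forall fun x => abs_nonneg _)
    calc |(∫ s in a..b, Real.exp (-(Fn n s)) * φ n s)
        - ∫ s in a..b, Real.exp (-(F s)) * H s|
        = |∫ s in a..b, (Real.exp (-(Fn n s)) * φ n s - Real.exp (-(F s)) * H s)| := by
          rw [intervalIntegral.integral_sub hii1 hGH_ii]
      _ ≤ ∫ s in a..b, |Real.exp (-(Fn n s)) * φ n s - Real.exp (-(F s)) * H s| :=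
          intervalIntegral.abs_integral_le_integral_abs hab
      _ ≤ ∫ s in a..b, (B * |φ n s - H s| + B * ((n:ℝ)+1)⁻¹ * |H s|) := by
          refine intervalIntegral.integral_mono_on hab ((hii1.sub hGH_ii).abs) hW_ii
            (fun s _ => hptwise s)
      _ = B * (∫ s in a..b, |φ n s - H s|) + B * ((n:ℝ)+1)⁻¹ * ∫ s in a..b, |H s| := by
          have e1 : IntervalIntegrable (fun s => B * |φ n s - H s|) volume a b := by
            simpa [Pi.sub_apply] using
              ((((hφint n).sub Hint).abs.const_mul B).intervalIntegrable (a := a) (b := b))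
          have e2 : IntervalIntegrable (fun s => B * ((n:ℝ)+1)⁻¹ * |H s|) volume a b :=
            (Hint.abs.const_mul (B * ((n:ℝ)+1)⁻¹)).intervalIntegrable
          rw [intervalIntegral.integral_add e1 e2,
            intervalIntegral.integral_const_mul, intervalIntegral.integral_const_mul]
      _ ≤ B * ((n:ℝ)+1)⁻¹ + B * ((n:ℝ)+1)⁻¹ * M₀ := by
          refine add_le_add (mul_le_mul_of_nonneg_left int1 hBpos.le)
            (mul_le_mul_of_nonneg_left int2 (by positivity))
      _ = B * ((n:ℝ)+1)⁻¹ * (1 + M₀) := by ring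
  have hIn : Tendsto (fun n => ∫ s in a..b, Real.exp (-(Fn n s)) * φ n s) atTop
      (𝓝 (∫ s in a..b, Real.exp (-(F s)) * H s)) := by
    rw [tendsto_iff_dist_tendsto_zero]
    refine squeeze_zero (fun n => dist_nonneg) (fun n => by simpa [Real.dist_eq] using key n) ?_
    have : Tendsto (fun n : ℕ => B * ((n:ℝ)+1)⁻¹ * (1 + M₀)) atTop (𝓝 (B * 0 * (1 + M₀))) :=
      (tendsto_inv.const_mul B).mul_const (1 + M₀)
    simpa using this
  have huniq : Real.exp (-(F b)) - Real.exp (-(F a))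
      = -∫ s in a..b, Real.exp (-(F s)) * H s := by
    refine tendsto_nhds_unique (f := fun n => Real.exp (-(Fn n b)) - Real.exp (-(Fn n a)))
      (hGb.sub hGa) ?_
    have : (fun n => Real.exp (-(Fn n b)) - Real.exp (-(Fn n a)))
        = fun n => -∫ s in a..b, Real.exp (-(Fn n s)) * φ n s := funext hFTCn
    rw [this]
    exact hIn.neg
  have hfinal : (∫ s in a..b, Real.exp (-(F s)) * H s)
      = ∫ s in a..b, Real.exp (-(∫ u in (0:ℝ)..s, h u)) * h s := by
    refine intervalIntegral.integral_congr (fun s hs => ?_)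
    have hs' : s ∈ Icc c d := (Icc_subset_Icc haIcc.1 hbIcc.2) (by rwa [uIcc_of_le hab] at hs)
    have e1 : H s = h s := indicator_of_mem hs' h
    have e2 : F s = ∫ u in (0:ℝ)..s, h u := Feq s hs'
    rw [e1, e2]
  calc Real.exp (-(∫ s in (0:ℝ)..b, h s)) - Real.exp (-(∫ s in (0:ℝ)..a, h s))
      = Real.exp (-(F b)) - Real.exp (-(F a)) := by
        rw [show F b = ∫ s in (0:ℝ)..b, h s from Feq b hbIcc,
          show F a = ∫ s in (0:ℝ)..a, h s from Feq a haIcc]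
    _ = -∫ s in a..b, Real.exp (-(F s)) * H s := huniq
    _ = _ := by rw [hfinal]


section
variable (N : StieltjesFunction ℝ)

/-- If an integer-valued Stieltjes function has no jumps on `(a,b]`, it is constant there. -/
lemma no_jump_const (hN_nat : ∀ t, ∃ n : ℕ, N t = n) {a b : ℝ} (hab : a ≤ b)
    (hnj : ∀ s, a < s → s ≤ b → ¬ (Function.leftLim N s < N s)) : N b = N a := by
  by_contra hne
  have hlt : N a < N b := lt_of_le_of_ne (N.mono hab) (Ne.symm hne)
  set T : Set ℝ := {s | s ≤ b ∧ N a < N s} with hT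
  have hbT : b ∈ T := ⟨le_rfl, hlt⟩
  have hTgt : ∀ s ∈ T, a < s := by
    intro s hs
    by_contra hsa
    exact absurd (N.mono (not_lt.1 hsa)) (not_le.2 hs.2)
  have hbdd : BddBelow T := ⟨a, fun s hs => (hTgt s hs).le⟩
  set u := sInf T with hu
  have hau : a ≤ u := le_csInf ⟨b, hbT⟩ (fun s hs => (hTgt s hs).le)
  have hub : u ≤ b := csInf_le hbdd hbT
  -- integer gap
  have hgap : ∀ s, N a < N s → N a + 1 ≤ N s := by
    intro s hs
    obtain ⟨na, hna⟩ := hN_nat a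
    obtain ⟨ns, hns⟩ := hN_nat s
    rw [hna, hns] at hs ⊢
    exact_mod_cast Nat.succ_le_of_lt (by exact_mod_cast hs)
  have hright : ∀ v, u < v → N a + 1 ≤ N v := by
    intro v hv
    obtain ⟨s, hsT, hsv⟩ := exists_lt_of_csInf_lt ⟨b, hbT⟩ hv
    exact le_trans (hgap s hsT.2) (N.mono hsv.le)
  have hNu : N a + 1 ≤ N u := by
    have htd : Tendsto N (𝓝[>] u) (𝓝 (N u)) :=
      (N.right_continuous u).tendsto.mono_left (nhdsWithin_mono u Ioi_subset_Ici_self)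
    exact ge_of_tendsto htd (eventually_nhdsWithin_of_forall (fun v hv => hright v hv))
  have haul : a < u := by
    rcases eq_or_lt_of_le hau with heq | hlt'
    · exfalso; rw [← heq] at hNu; linarith
    · exact hlt'
  have hleft : Function.leftLim N u ≤ N a := by
    refine le_of_tendsto (N.mono.tendsto_leftLim u)
      (eventually_nhdsWithin_of_forall (fun s hs => ?_))
    by_contra hNs
    have hsT : s ∈ T := ⟨(le_of_lt (lt_of_lt_of_le hs hub)), not_le.1 hNs⟩
    exact absurd (csInf_le hbdd hsT) (not_le.2 hs)
  exact hnj u haul hub (lt_of_le_of_lt hleft (by linarith))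

/-- Counting formula : the increment of `N` equals the number of jump points. -/
lemma count_formula (hN_nat : ∀ t, ∃ n : ℕ, N t = n)
    (hN_jump : ∀ t, N t - Function.leftLim N t ≤ 1) :
    ∀ n : ℕ, ∀ a b : ℝ, a ≤ b →
      ∀ hf : {s : ℝ | a < s ∧ s ≤ b ∧ Function.leftLim N s < N s}.Finite,
      hf.toFinset.card = n → N b = N a + n := by
  intro n
  induction n with
  | zero =>
    intro a b hab hf hcard
    have hempty : ∀ s, a < s → s ≤ b → ¬ (Function.leftLim N s < N s) := by
      intro s h1 h2 h3
      have : s ∈ hf.toFinset := hf.mem_toFinset.2 ⟨h1, h2, h3⟩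
      rw [Finset.card_eq_zero.1 hcard] at this
      exact absurd this (Finset.notMem_empty s)
    simpa using no_jump_const N hN_nat hab hempty
  | succ n ih =>
    intro a b hab hf hcard
    set J := hf.toFinset with hJ
    have hJne : J.Nonempty := Finset.card_pos.1 (by rw [hcard]; exact Nat.succ_pos n)
    set m := J.max' hJne with hm
    have hmJ : m ∈ J := J.max'_mem hJne
    obtain ⟨ham, hmb, hmjump⟩ := hf.mem_toFinset.1 hmJ
    set K := J.erase m with hK
    set q : ℝ := if hKne : K.Nonempty then K.max' hKne else a with hq
    have haq : a ≤ q := by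
      rw [hq]
      split_ifs with hKne
      · exact (hf.mem_toFinset.1 (Finset.mem_of_mem_erase (K.max'_mem hKne))).1.le
      · exact le_rfl
    have hqm : q < m := by
      rw [hq]
      split_ifs with hKne
      · have h1 := Finset.le_max' J _ (Finset.mem_of_mem_erase (K.max'_mem hKne))
        have h2 := Finset.ne_of_mem_erase (K.max'_mem hKne)
        exact lt_of_le_of_ne h1 h2
      · exact ham
    have hqU : ∀ s ∈ J, s ≠ m → s ≤ q := by
      intro s hs hsm
      have hsK : s ∈ K := Finset.mem_erase.2 ⟨hsm, hs⟩
      rw [hq]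
      split_ifs with hKne
      · exact Finset.le_max' K s hsK
      · exact absurd ⟨s, hsK⟩ hKne
    set u := (q + m) / 2 with hudef
    have hqu : q < u := by rw [hudef]; linarith
    have hum : u < m := by rw [hudef]; linarith
    have hau : a ≤ u := le_trans haq hqu.le
    -- no jumps in (q, m)
    have hnjqm : ∀ s, q < s → s < m → ¬ (Function.leftLim N s < N s) := by
      intro s h1 h2 h3
      have hsJ : s ∈ J := hf.mem_toFinset.2 ⟨lt_of_le_of_lt haq h1, le_trans h2.le hmb, h3⟩
      exact absurd (hqU s hsJ (ne_of_lt h2)) (not_le.2 h1)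
    -- N constant on [u, m)
    have hconst : ∀ s, u ≤ s → s < m → N s = N u := by
      intro s h1 h2
      exact no_jump_const N hN_nat h1
        (fun v hv1 hv2 => hnjqm v (lt_of_lt_of_le hqu (le_of_lt hv1))
          (lt_of_le_of_lt hv2 h2))
    have hll : Function.leftLim N m = N u := by
      refine leftLim_eq_of_tendsto ?_
      refine Tendsto.congr' ?_ (tendsto_const_nhds (α := ℝ))
      filter_upwards [Ioo_mem_nhdsLT_of_mem (⟨hum, le_rfl⟩ : m ∈ Ioc u m)] with s hs
      exact (hconst s hs.1.le hs.2).symm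
    -- jump of size one at m
    have hNm : N m = N u + 1 := by
      obtain ⟨nu, hnu⟩ := hN_nat u
      obtain ⟨nm, hnm⟩ := hN_nat m
      have h1 : Function.leftLim N m < N m := hmjump
      have h2 : N m - Function.leftLim N m ≤ 1 := hN_jump m
      rw [hll] at h1 h2
      rw [hnu, hnm] at h1 h2 ⊢
      have hlt : nu < nm := by exact_mod_cast h1
      have hle : nm ≤ nu + 1 := by
        have : (nm : ℝ) ≤ (nu : ℝ) + 1 := by linarith
        exact_mod_cast this
      have : nm = nu + 1 := le_antisymm hle (Nat.succ_le_of_lt hlt)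
      rw [this]; push_cast; ring
    -- apply IH on (a, u]
    have hfin' : {s : ℝ | a < s ∧ s ≤ u ∧ Function.leftLim N s < N s}.Finite := by
      refine hf.subset (fun s hs => ⟨hs.1, le_trans hs.2.1 (le_trans hum.le hmb), hs.2.2⟩)
    have hKcard : hfin'.toFinset = K := by
      ext s
      rw [hfin'.mem_toFinset, hK, Finset.mem_erase, hf.mem_toFinset]
      constructor
      · rintro ⟨h1, h2, h3⟩
        exact ⟨ne_of_lt (lt_of_le_of_lt h2 hum), h1, le_trans h2 (le_trans hum.le hmb), h3⟩
      · rintro ⟨hne, h1, h2, h3⟩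
        refine ⟨h1, ?_, h3⟩
        have hsJ : s ∈ J := hf.mem_toFinset.2 ⟨h1, h2, h3⟩
        exact le_trans (hqU s hsJ hne) hqu.le
    have hNu : N u = N a + n := by
      refine ih a u hau hfin' ?_
      rw [hKcard, hK, Finset.card_erase_of_mem hmJ, hcard]
      omega
    -- no jumps in (m, b]
    have hNb : N b = N m := by
      refine no_jump_const N hN_nat hmb (fun s h1 h2 h3 => ?_)
      have hsJ : s ∈ J := hf.mem_toFinset.2 ⟨lt_trans ham h1, h2, h3⟩
      exact absurd (Finset.le_max' J s hsJ) (not_le.2 h1)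
    rw [hNb, hNm, hNu]
    push_cast; ring

end

section
variable (N : StieltjesFunction ℝ)

lemma measure_restrict_eq (hN_nat : ∀ t, ∃ n : ℕ, N t = n)
    (hN_jump : ∀ t, N t - Function.leftLim N t ≤ 1)
    (hN_fin : ∀ t, {s : ℝ | 0 < s ∧ s ≤ t ∧ Function.leftLim N s < N s}.Finite)
    {t : ℝ} (ht : 0 ≤ t) :
    N.measure.restrict (Ioc 0 t) = ∑ s ∈ (hN_fin t).toFinset, Measure.dirac s := by
  classical
  refine Measure.ext_of_Ioc' _ _ ?_ ?_
  · intro a b _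
    rw [Measure.restrict_apply measurableSet_Ioc]
    refine ne_of_lt (lt_of_le_of_lt (measure_mono inter_subset_left) ?_)
    rw [N.measure_Ioc]
    exact ENNReal.ofReal_lt_top
  · intro a b _
    rw [Measure.restrict_apply measurableSet_Ioc, Ioc_inter_Ioc,
      Measure.finset_sum_apply]
    have hRHS : (∑ s ∈ (hN_fin t).toFinset, Measure.dirac s (Ioc a b))
        = (((hN_fin t).toFinset.filter (fun s => s ∈ Ioc a b)).card : ENNReal) := by
      rw [← Finset.sum_boole]
      refine Finset.sum_congr rfl (fun s _ => ?_)
      rw [Measure.dirac_apply' s measurableSet_Ioc, Set.indicator_apply]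
      split_ifs <;> simp
    rw [hRHS]
    set c := max a 0 with hc
    set d := min b t with hd
    by_cases hcd : c ≤ d
    · have hfin2 : {s : ℝ | c < s ∧ s ≤ d ∧ Function.leftLim N s < N s}.Finite :=
        (hN_fin t).subset (fun s hs =>
          ⟨lt_of_le_of_lt (le_max_right a 0) hs.1, le_trans hs.2.1 (min_le_right b t), hs.2.2⟩)
      have hcount := count_formula N hN_nat hN_jump hfin2.toFinset.card c d hcd hfin2 rfl
      have hsets : hfin2.toFinset = (hN_fin t).toFinset.filter (fun s => s ∈ Ioc a b) := by
        ext s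
        rw [hfin2.mem_toFinset, Finset.mem_filter, (hN_fin t).mem_toFinset]
        constructor
        · rintro ⟨h1, h2, h3⟩
          have h1' := max_lt_iff.1 h1
          have h2' := le_min_iff.1 h2
          exact ⟨⟨h1'.2, h2'.2, h3⟩, h1'.1, h2'.1⟩
        · rintro ⟨⟨h1, h2, h3⟩, h4, h5⟩
          exact ⟨max_lt_iff.2 ⟨h4, h1⟩, le_min_iff.2 ⟨h5, h2⟩, h3⟩
      rw [N.measure_Ioc, hcount, ← hsets]
      simp
    · have hdc : d < c := not_le.1 hcd
      have h0 : N.measure (Ioc c d) = 0 := by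
        rw [N.measure_Ioc, ENNReal.ofReal_eq_zero]
        have := N.mono hdc.le
        linarith
      have hfilter : ((hN_fin t).toFinset.filter (fun s => s ∈ Ioc a b)) = ∅ := by
        rw [Finset.filter_eq_empty_iff]
        intro s hs hmem
        obtain ⟨h1, h2, _⟩ := (hN_fin t).mem_toFinset.1 hs
        have hsc : c < s := max_lt_iff.2 ⟨hmem.1, h1⟩
        have hsd : s ≤ d := le_min_iff.2 ⟨hmem.2, h2⟩
        exact absurd (lt_of_lt_of_le hsc hsd) (not_lt.2 hdc.le)
      rw [h0, hfilter]
      simp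

lemma integrable_dN (hN_nat : ∀ t, ∃ n : ℕ, N t = n)
    (hN_jump : ∀ t, N t - Function.leftLim N t ≤ 1)
    (hN_fin : ∀ t, {s : ℝ | 0 < s ∧ s ≤ t ∧ Function.leftLim N s < N s}.Finite)
    {t : ℝ} (ht : 0 ≤ t) (f : ℝ → ℝ) :
    IntegrableOn f (Ioc 0 t) N.measure := by
  rw [IntegrableOn, measure_restrict_eq N hN_nat hN_jump hN_fin ht,
    integrable_finset_sum_measure]
  intro s _
  refine (integrable_const (f s)).congr ?_
  refine Filter.eventuallyEq_of_mem (s := {s}) ?_ (fun x hx => by rw [hx])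
  rw [mem_ae_iff]
  rw [Measure.dirac_apply' _ (measurableSet_singleton s).compl]
  simp

lemma integral_dN (hN_nat : ∀ t, ∃ n : ℕ, N t = n)
    (hN_jump : ∀ t, N t - Function.leftLim N t ≤ 1)
    (hN_fin : ∀ t, {s : ℝ | 0 < s ∧ s ≤ t ∧ Function.leftLim N s < N s}.Finite)
    {t : ℝ} (ht : 0 ≤ t) (f : ℝ → ℝ) :
    ∫ s in Ioc 0 t, f s ∂N.measure = ∑ s ∈ (hN_fin t).toFinset, f s := by
  have hint : ∀ s ∈ (hN_fin t).toFinset, Integrable f (Measure.dirac s) := by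
    intro s _
    refine (integrable_const (f s)).congr ?_
    refine Filter.eventuallyEq_of_mem (s := {s}) ?_ (fun x hx => by rw [hx])
    rw [mem_ae_iff, Measure.dirac_apply' _ (measurableSet_singleton s).compl]
    simp
  rw [measure_restrict_eq N hN_nat hN_jump hN_fin ht, integral_finset_sum_measure hint]
  exact Finset.sum_congr rfl (fun s _ => integral_dirac f s)

end

lemma leftLim_eq_self_of_not_tendsto {f : ℝ → ℝ} {a : ℝ}
    (h : ¬∃ y, Tendsto f (𝓝[<] a) (𝓝 y)) : Function.leftLim f a = f a := by
  have htop : Preorder.topology ℝ = (inferInstance : TopologicalSpace ℝ) :=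
    ((inferInstance : OrderTopology ℝ).topology_eq_generate_intervals).symm
  simp only [Function.leftLim]
  rw [htop]
  exact if_pos (Or.inr h)

lemma leftLim_congr {f g : ℝ → ℝ} {a : ℝ} (h1 : f =ᶠ[𝓝[<] a] g) (h2 : f a = g a) :
    Function.leftLim f a = Function.leftLim g a := by
  by_cases hex : ∃ y, Tendsto f (𝓝[<] a) (𝓝 y)
  · obtain ⟨y, hy⟩ := hex
    rw [leftLim_eq_of_tendsto hy,
      leftLim_eq_of_tendsto (hy.congr' h1)]
  · have hex' : ¬∃ y, Tendsto g (𝓝[<] a) (𝓝 y) := by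
      rintro ⟨y, hy⟩
      exact hex ⟨y, hy.congr' h1.symm⟩
    rw [leftLim_eq_self_of_not_tendsto hex, leftLim_eq_self_of_not_tendsto hex', h2]

lemma toFinset_jump_eq (N : StieltjesFunction ℝ) {a b : ℝ} (hab : a ≤ b)
    (hfa : {s : ℝ | 0 < s ∧ s ≤ a ∧ Function.leftLim N s < N s}.Finite)
    (hfb : {s : ℝ | 0 < s ∧ s ≤ b ∧ Function.leftLim N s < N s}.Finite)
    (hnj : ∀ s, a < s → s ≤ b → ¬ (Function.leftLim N s < N s)) :
    hfb.toFinset = hfa.toFinset := by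
  ext s
  rw [hfb.mem_toFinset, hfa.mem_toFinset]
  constructor
  · rintro ⟨h1, h2, h3⟩
    refine ⟨h1, ?_, h3⟩
    by_contra hsa
    exact hnj s (not_le.1 hsa) h2 h3
  · rintro ⟨h1, h2, h3⟩
    exact ⟨h1, h2.trans hab, h3⟩

lemma exists_gap (N : StieltjesFunction ℝ)
    (hN_fin : ∀ t, {s : ℝ | 0 < s ∧ s ≤ t ∧ Function.leftLim N s < N s}.Finite)
    {a T : ℝ} (ha : 0 ≤ a) (haT : a < T) :
    ∃ δ : ℝ, 0 < δ ∧ a + δ ≤ T ∧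
      ∀ s, a < s → s ≤ a + δ → ¬ (Function.leftLim N s < N s) := by
  classical
  set S := ((hN_fin T).toFinset.filter (fun s => a < s)) with hS
  by_cases hne : S.Nonempty
  · set w := S.min' hne with hw
    have hwS : w ∈ S := S.min'_mem hne
    have haw : a < w := (Finset.mem_filter.1 hwS).2
    refine ⟨min (T - a) ((w - a)/2), lt_min (by linarith) (by linarith), ?_, ?_⟩
    · have := min_le_left (T - a) ((w - a)/2); linarith
    · intro s h1 h2 h3
      have hm1 := min_le_left (T - a) ((w - a)/2)
      have hm2 := min_le_right (T - a) ((w - a)/2)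
      have hsT : s ≤ T := by linarith
      have hsS : s ∈ S := Finset.mem_filter.2
        ⟨(hN_fin T).mem_toFinset.2 ⟨lt_of_le_of_lt ha h1, hsT, h3⟩, h1⟩
      have := S.min'_le s hsS
      linarith
  · refine ⟨T - a, by linarith, by linarith, fun s h1 h2 h3 => ?_⟩
    exact hne ⟨s, Finset.mem_filter.2
      ⟨(hN_fin T).mem_toFinset.2 ⟨lt_of_le_of_lt ha h1, by linarith, h3⟩, h1⟩⟩


end LRSDEHelpers

/-- `R` solves the likelihood-ratio SDE `R(t) = 1 + ∫₀ᵗ R(s−)(g(s)−1) dM(s)` pathwise,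
where `M(t) = N(t) − ∫₀ᵗ λ(s) ds` and `N` is a counting process; the `dM`-integral is
split into its Lebesgue–Stieltjes part against `dN` and its Lebesgue part against `λ ds`. -/
def SolvesLRSDE (N : StieltjesFunction ℝ) (g lam : ℝ → ℝ) (R : ℝ → ℝ) : Prop :=
  (∀ t, ContinuousWithinAt R (Set.Ici t) t) ∧
  (∀ t, 0 ≤ t → IntegrableOn (fun s => Function.leftLim R s * (g s - 1)) (Set.Ioc 0 t)
      N.measure) ∧
  (∀ t, 0 ≤ t → IntervalIntegrable (fun s => R s * (g s - 1) * lam s) volume 0 t) ∧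
  ∀ t, 0 ≤ t →
    R t = 1 + (∫ s in Set.Ioc (0:ℝ) t, Function.leftLim R s * (g s - 1) ∂N.measure)
            - ∫ s in (0:ℝ)..t, R s * (g s - 1) * lam s

/-- The Doléans-Dade (stochastic exponential) solution:
`R(t) = exp(−∫₀ᵗ (g−1)λ) · ∏_{s ≤ t, ΔN(s)=1} g(s)`. -/
noncomputable def doleansDade (N : StieltjesFunction ℝ) (g lam : ℝ → ℝ) (t : ℝ) : ℝ :=
  Real.exp (-(∫ s in (0:ℝ)..t, (g s - 1) * lam s)) *
    ∏ᶠ s ∈ {s : ℝ | 0 < s ∧ s ≤ t ∧ Function.leftLim N s < N s}, g s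

/-- The SDE `R(t) = 1 + ∫₀ᵗ R(s−)(g(s)−1) dM(s)`, with `M = N − ∫λ` the martingale of a
counting process `N` with intensity `λ`, has a unique solution, given by the
Doléans-Dade stochastic exponential. -/
theorem stmt9 (N : StieltjesFunction ℝ) (g lam : ℝ → ℝ)
    -- N is a counting process with N(0) = 0, ℕ-valued, jumps of size 1,
    -- finitely many jumps on compacts
    (hN0 : N 0 = 0)
    (hN_nat : ∀ t, ∃ n : ℕ, N t = n)
    (hN_jump : ∀ t, N t - Function.leftLim N t ≤ 1)
    (hN_fin : ∀ t, {s : ℝ | 0 < s ∧ s ≤ t ∧ Function.leftLim N s < N s}.Finite)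
    -- g is bounded and (as a deterministic function of time) predictable:
    -- left-continuous and measurable
    (hg_bdd : ∃ C, ∀ s, |g s| ≤ C)
    (hg_meas : Measurable g)
    (hg_left : ∀ s, ContinuousWithinAt g (Set.Iic s) s)
    -- λ is a locally integrable nonnegative intensity
    (hlam_nonneg : ∀ s, 0 ≤ lam s)
    (hlam_loc : LocallyIntegrable lam volume) :
    SolvesLRSDE N g lam (doleansDade N g lam) ∧
      ∀ R₁ R₂, SolvesLRSDE N g lam R₁ → SolvesLRSDE N g lam R₂ →
        ∀ t, 0 ≤ t → R₁ t = R₂ t := by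

  classical
  obtain ⟨C, hC⟩ := hg_bdd
  have hC0 : 0 ≤ C := le_trans (abs_nonneg _) (hC 0)
  have hNnonneg : ∀ s : ℝ, 0 ≤ N s := fun s => by
    obtain ⟨n, hn⟩ := hN_nat s
    rw [hn]; positivity
  have hNneg : ∀ s : ℝ, s ≤ 0 → N s = 0 := by
    intro s hs
    obtain ⟨n, hn⟩ := hN_nat s
    have h1 : N s ≤ N 0 := N.mono hs
    rw [hN0, hn] at h1
    rw [hn]
    norm_num
    exact_mod_cast le_antisymm (by exact_mod_cast h1) (Nat.zero_le n)
  have hnojump_neg : ∀ s : ℝ, s ≤ 0 → ¬ (Function.leftLim N s < N s) := by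
    intro s hs hlt
    have h1 : (0:ℝ) ≤ Function.leftLim N s :=
      ge_of_tendsto (N.mono.tendsto_leftLim s) (Eventually.of_forall (fun x => hNnonneg x))
    rw [hNneg s hs] at hlt
    linarith
  set h : ℝ → ℝ := fun s => (g s - 1) * lam s with hh
  have hlam_II : ∀ a b : ℝ, IntervalIntegrable lam volume a b := fun a b =>
    (hlam_loc.integrableOn_isCompact isCompact_uIcc).intervalIntegrable
  have hgC1 : ∀ s, |g s - 1| ≤ C + 1 := fun s => by
    calc |g s - 1| ≤ |g s| + 1 := by simpa using abs_sub (g s) 1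
      _ ≤ C + 1 := by linarith [hC s]
  have h_II : ∀ a b : ℝ, IntervalIntegrable h volume a b := by
    intro a b
    refine IntervalIntegrable.mono_fun ((hlam_II a b).abs.const_mul (C + 1)) ?_ ?_
    · exact (((hg_meas.sub measurable_const).aestronglyMeasurable).mul
        hlam_loc.aestronglyMeasurable).restrict
    · refine Eventually.of_forall (fun x => ?_)
      simp only [Real.norm_eq_abs, hh, abs_mul, abs_abs]
      exact mul_le_mul_of_nonneg_right (le_trans (hgC1 x) (le_abs_self _)) (abs_nonneg _)
  set E : ℝ → ℝ := fun x => Real.exp (-(∫ s in (0:ℝ)..x, h s)) with hE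
  have hEcont : Continuous E :=
    Real.continuous_exp.comp (intervalIntegral.continuous_primitive h_II 0).neg
  have hftc : ∀ a b : ℝ, a ≤ b → E b - E a = -∫ s in a..b, E s * h s := fun a b hab =>
    ftc_exp h_II hab
  have hE0 : E 0 = 1 := by rw [hE]; simp
  set P : ℝ → ℝ :=
    fun x => ∏ᶠ s ∈ {s : ℝ | 0 < s ∧ s ≤ x ∧ Function.leftLim N s < N s}, g s with hP
  set R : ℝ → ℝ := doleansDade N g lam with hRdef
  have hRx : ∀ x, R x = E x * P x := fun x => rfl
  have hPfin : ∀ x, P x = ∏ s ∈ (hN_fin x).toFinset, g s := by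
    intro x
    show (∏ᶠ s ∈ {s : ℝ | 0 < s ∧ s ≤ x ∧ Function.leftLim N s < N s}, g s) = _
    rw [← finprod_mem_coe_finset]
    exact finprod_mem_congr ((hN_fin x).coe_toFinset).symm (fun _ _ => rfl)
  have hJsub : ∀ {x y : ℝ}, x ≤ y → (hN_fin x).toFinset ⊆ (hN_fin y).toFinset := by
    intro x y hxy
    rw [Set.Finite.toFinset_subset_toFinset]
    exact fun s hs => ⟨hs.1, hs.2.1.trans hxy, hs.2.2⟩
  have hPeq_of_nj : ∀ {x y : ℝ}, x ≤ y →
      (∀ s, x < s → s ≤ y → ¬(Function.leftLim N s < N s)) → P y = P x := by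
    intro x y h1 h2
    rw [hPfin, hPfin, toFinset_jump_eq N h1 (hN_fin x) (hN_fin y) h2]
  -- part 1 : right continuity
  have part1 : ∀ t, ContinuousWithinAt R (Set.Ici t) t := by
    intro t
    have hgap' : ∃ δ : ℝ, 0 < δ ∧ ∀ s, t < s → s ≤ t + δ → ¬(Function.leftLim N s < N s) := by
      rcases lt_or_ge t 0 with ht | ht
      · exact ⟨-t, by linarith, fun s h1 h2 h3 => hnojump_neg s (by linarith) h3⟩
      · obtain ⟨δ, hδ0, _, hnj⟩ := exists_gap N hN_fin ht (lt_add_one t)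
        exact ⟨δ, hδ0, hnj⟩
    obtain ⟨δ, hδ0, hnj⟩ := hgap'
    have hev : ∀ᶠ x in 𝓝[Set.Ici t] t, P x = P t := by
      filter_upwards [Ico_mem_nhdsGE
        (lt_add_of_pos_right t hδ0)] with x hx
      exact hPeq_of_nj hx.1 (fun s h1 h2 => hnj s h1 (by linarith [hx.2]))
    have h1 : Tendsto E (𝓝[Set.Ici t] t) (𝓝 (E t)) :=
      (hEcont.tendsto t).mono_left nhdsWithin_le_nhds
    have h2 : Tendsto P (𝓝[Set.Ici t] t) (𝓝 (P t)) := by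
      refine Tendsto.congr' ?_ (tendsto_const_nhds (α := ℝ))
      filter_upwards [hev] with x hx
      exact hx.symm
    have h3 : Tendsto (fun x => E x * P x) (𝓝[Set.Ici t] t) (𝓝 (E t * P t)) := h1.mul h2
    have h4 : Tendsto R (𝓝[Set.Ici t] t) (𝓝 (E t * P t)) :=
      h3.congr (fun x => (hRx x).symm)
    rw [ContinuousWithinAt, hRx t]
    exact h4
  -- part 2/3 prerequisites
  have hPQ : ∀ T x : ℝ, x ≤ T →
      P x = ∏ s ∈ (hN_fin T).toFinset, (if s ≤ x then g s else 1) := by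
    intro T x hxT
    have hset : (hN_fin x).toFinset = (hN_fin T).toFinset.filter (fun s => s ≤ x) := by
      ext s
      rw [(hN_fin x).mem_toFinset, Finset.mem_filter, (hN_fin T).mem_toFinset]
      constructor
      · rintro ⟨h1, h2, h3⟩; exact ⟨⟨h1, h2.trans hxT, h3⟩, h2⟩
      · rintro ⟨⟨h1, _, h3⟩, h4⟩; exact ⟨h1, h4, h3⟩
    rw [hPfin x, hset, Finset.prod_filter]
  have hQmeas : ∀ T : ℝ,
      Measurable (fun x : ℝ => ∏ s ∈ (hN_fin T).toFinset, (if s ≤ x then g s else 1)) := by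
    intro T
    refine Finset.measurable_prod _ (fun s _ => ?_)
    exact Measurable.ite measurableSet_Ici measurable_const measurable_const
  have hBP : ∀ T x : ℝ, x ≤ T → |P x| ≤ ∏ s ∈ (hN_fin T).toFinset, max |g s| 1 := by
    intro T x hxT
    rw [hPfin x, Finset.abs_prod]
    calc (∏ s ∈ (hN_fin x).toFinset, |g s|)
        ≤ ∏ s ∈ (hN_fin x).toFinset, max |g s| 1 :=
          Finset.prod_le_prod (fun i _ => abs_nonneg _) (fun i _ => le_max_left _ _)
      _ ≤ ∏ s ∈ (hN_fin T).toFinset, max |g s| 1 := by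
          rw [← Finset.prod_sdiff (hJsub hxT)]
          have h1 := Finset.prod_le_prod (s := (hN_fin T).toFinset \ (hN_fin x).toFinset)
            (f := fun _ => (1:ℝ)) (g := fun s => max |g s| 1)
            (fun i _ => zero_le_one) (fun i _ => le_max_right _ _)
          rw [Finset.prod_const_one] at h1
          exact le_mul_of_one_le_left
            (Finset.prod_nonneg (fun i _ => le_trans zero_le_one (le_max_right _ _))) h1
  have hR_II : ∀ a b : ℝ, IntervalIntegrable (fun s => R s * (g s - 1) * lam s) volume a b := by
    have key : ∀ a b : ℝ, a ≤ b →
        IntervalIntegrable (fun s => R s * (g s - 1) * lam s) volume a b := by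
      intro a b hab
      set T := max b 0 with hT
      obtain ⟨BE, hBE⟩ :=
        (isCompact_Icc (a := a) (b := b)).exists_bound_of_continuousOn hEcont.continuousOn
      set BPv := ∏ s ∈ (hN_fin T).toFinset, max |g s| 1 with hBPv
      have hBPv0 : 0 ≤ BPv :=
        Finset.prod_nonneg (fun i _ => le_trans zero_le_one (le_max_right _ _))
      have hmeasQ : AEStronglyMeasurable
          (fun x => (E x * (∏ s ∈ (hN_fin T).toFinset, (if s ≤ x then g s else 1)))
            * (g x - 1) * lam x) (volume.restrict (Ioc a b)) := by
        refine AEStronglyMeasurable.mul ?_ hlam_loc.aestronglyMeasurable.restrict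
        exact ((hEcont.measurable.mul (hQmeas T)).mul
          (hg_meas.sub measurable_const)).aestronglyMeasurable.restrict
      have hmeas : AEStronglyMeasurable (fun s => R s * (g s - 1) * lam s)
          (volume.restrict (Ioc a b)) := by
        refine hmeasQ.congr ?_
        filter_upwards [ae_restrict_mem measurableSet_Ioc] with x hx
        rw [← hPQ T x (le_trans hx.2 (le_max_left b 0)), ← hRx x]
      have hbnd : IntegrableOn (fun x => (|BE| * BPv * (C+1)) * |lam x|) (Ioc a b) volume :=
        ((hlam_II a b).1).abs.const_mul _
      refine (intervalIntegrable_iff_integrableOn_Ioc_of_le hab).2 ?_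
      refine Integrable.mono' hbnd hmeas ?_
      filter_upwards [ae_restrict_mem measurableSet_Ioc] with x hx
      have hxT : x ≤ T := le_trans hx.2 (le_max_left b 0)
      have h1 : |E x| ≤ |BE| :=
        le_trans (by simpa [Real.norm_eq_abs] using hBE x (Ioc_subset_Icc_self hx))
          (le_abs_self BE)
      have h2 : |P x| ≤ BPv := hBP T x hxT
      have h3 : |g x - 1| ≤ C + 1 := hgC1 x
      rw [Real.norm_eq_abs, hRx x, abs_mul, abs_mul, abs_mul]
      exact mul_le_mul_of_nonneg_right
        (mul_le_mul (mul_le_mul h1 h2 (abs_nonneg _) (abs_nonneg _)) h3 (abs_nonneg _)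
          (by positivity)) (abs_nonneg _)
    intro a b
    rcases le_total a b with hab | hba
    · exact key a b hab
    · exact (key b a hba).symm
  have part2 : ∀ t, 0 ≤ t →
      IntegrableOn (fun s => Function.leftLim R s * (g s - 1)) (Set.Ioc 0 t) N.measure :=
    fun t ht => integrable_dN N hN_nat hN_jump hN_fin ht _
  have part3 : ∀ t, 0 ≤ t →
      IntervalIntegrable (fun s => R s * (g s - 1) * lam s) volume 0 t :=
    fun t _ => hR_II 0 t
  -- main identity by induction on the number of jumps
  have hmain : ∀ n : ℕ, ∀ t : ℝ, 0 ≤ t → (hN_fin t).toFinset.card = n →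
      R t = 1 + (∑ s ∈ (hN_fin t).toFinset, Function.leftLim R s * (g s - 1))
        - ∫ s in (0:ℝ)..t, R s * (g s - 1) * lam s := by
    intro n
    induction n with
    | zero =>
      intro t ht hcard
      have hJempty : (hN_fin t).toFinset = ∅ := Finset.card_eq_zero.1 hcard
      have hRE : ∀ x, x ≤ t → R x = E x := by
        intro x hx
        have hsub := hJsub hx
        rw [hJempty] at hsub
        rw [hRx x, hPfin x, Finset.subset_empty.1 hsub, Finset.prod_empty, mul_one]
      have hcongr : (∫ s in (0:ℝ)..t, R s * (g s - 1) * lam s)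
          = ∫ s in (0:ℝ)..t, E s * h s := by
        refine intervalIntegral.integral_congr (fun s hs => ?_)
        rw [uIcc_of_le ht] at hs
        rw [hRE s hs.2]
        simp only [hh]
        ring
      rw [hRE t le_rfl, hJempty, hcongr]
      simp only [Finset.sum_empty]
      have hftc0 := hftc 0 t ht
      rw [hE0] at hftc0
      linarith
    | succ n ih =>
      intro t ht hcard
      set J := (hN_fin t).toFinset with hJdef
      have hJmem : ∀ s, s ∈ J ↔ (0 < s ∧ s ≤ t ∧ Function.leftLim N s < N s) :=
        fun s => (hN_fin t).mem_toFinset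
      have hJne : J.Nonempty := Finset.card_pos.1 (by rw [hcard]; exact Nat.succ_pos n)
      set m := J.max' hJne with hmdef
      have hmJ : m ∈ J := J.max'_mem hJne
      obtain ⟨hm0, hmt, hmjump⟩ := (hJmem m).1 hmJ
      set K := J.erase m with hKdef
      set q : ℝ := if hKne : K.Nonempty then K.max' hKne else 0 with hqdef
      have hq0 : 0 ≤ q := by
        rw [hqdef]; split_ifs with hKne
        · exact ((hJmem _).1 (Finset.mem_of_mem_erase (K.max'_mem hKne))).1.le
        · exact le_rfl
      have hqm : q < m := by
        rw [hqdef]; split_ifs with hKne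
        · exact lt_of_le_of_ne (Finset.le_max' J _ (Finset.mem_of_mem_erase (K.max'_mem hKne)))
            (Finset.ne_of_mem_erase (K.max'_mem hKne))
        · exact hm0
      have hqU : ∀ s ∈ J, s ≠ m → s ≤ q := by
        intro s hs hsm
        have hsK : s ∈ K := Finset.mem_erase.2 ⟨hsm, hs⟩
        rw [hqdef]; split_ifs with hKne
        · exact Finset.le_max' K s hsK
        · exact absurd ⟨s, hsK⟩ hKne
      set u : ℝ := (q + m) / 2 with hudef
      have hqu : q < u := by rw [hudef]; linarith
      have hum : u < m := by rw [hudef]; linarith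
      have hu0 : 0 ≤ u := le_trans hq0 hqu.le
      have hJu : (hN_fin u).toFinset = K := by
        ext s
        rw [(hN_fin u).mem_toFinset, hKdef, Finset.mem_erase, hJmem s]
        constructor
        · rintro ⟨h1, h2, h3⟩
          exact ⟨ne_of_lt (lt_of_le_of_lt h2 hum), h1, le_trans h2 (le_trans hum.le hmt), h3⟩
        · rintro ⟨hne, h1, h2, h3⟩
          exact ⟨h1, le_trans (hqU s ((hJmem s).2 ⟨h1, h2, h3⟩) hne) hqu.le, h3⟩
      have hcardK : (hN_fin u).toFinset.card = n := by
        rw [hJu, hKdef, Finset.card_erase_of_mem hmJ, hcard]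
        omega
      have hIH := ih u hu0 hcardK
      rw [hJu] at hIH
      have hJx_mid : ∀ x, u ≤ x → x < m → (hN_fin x).toFinset = K := by
        intro x h1 h2
        rw [← hJu]
        refine toFinset_jump_eq N h1 (hN_fin u) (hN_fin x) ?_
        intro s hs1 hs2 hs3
        have hsJ : s ∈ J := (hJmem s).2
          ⟨lt_of_le_of_lt hu0 hs1, le_trans hs2 (le_trans h2.le hmt), hs3⟩
        have := hqU s hsJ (ne_of_lt (lt_of_le_of_lt hs2 h2))
        linarith
      have hPmid : ∀ x, u ≤ x → x < m → P x = P u := by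
        intro x h1 h2
        rw [hPfin x, hPfin u, hJx_mid x h1 h2, hJu]
      have hJx_top : ∀ x, m ≤ x → x ≤ t → (hN_fin x).toFinset = J := by
        intro x h1 h2
        have hJm : (hN_fin m).toFinset = J := by
          ext s
          rw [(hN_fin m).mem_toFinset, hJmem s]
          constructor
          · rintro ⟨a1, a2, a3⟩; exact ⟨a1, le_trans a2 hmt, a3⟩
          · rintro ⟨a1, a2, a3⟩; exact ⟨a1, Finset.le_max' J s ((hJmem s).2 ⟨a1, a2, a3⟩), a3⟩
        rw [← hJm]
        refine toFinset_jump_eq N h1 (hN_fin m) (hN_fin x) ?_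
        intro s hs1 hs2 hs3
        have hsJ : s ∈ J := (hJmem s).2 ⟨lt_trans hm0 hs1, le_trans hs2 h2, hs3⟩
        exact absurd (Finset.le_max' J s hsJ) (not_le.2 hs1)
      have hPtop : ∀ x, m ≤ x → x ≤ t → P x = P m := by
        intro x h1 h2
        rw [hPfin x, hPfin m, hJx_top x h1 h2, hJx_top m le_rfl hmt]
      have hPm_split : P m = P u * g m := by
        rw [hPfin m, hJx_top m le_rfl hmt, hPfin u, hJu, hKdef,
          ← Finset.prod_erase_mul J g hmJ]
      have hllRm : Function.leftLim R m = E m * P u := by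
        refine leftLim_eq_of_tendsto ?_
        have h1 : Tendsto (fun x => E x * P u) (𝓝[<] m) (𝓝 (E m * P u)) :=
          ((hEcont.tendsto m).mono_left nhdsWithin_le_nhds).mul_const (P u)
        refine h1.congr' ?_
        filter_upwards [Ioo_mem_nhdsLT_of_mem (⟨hum, le_rfl⟩ : m ∈ Ioc u m)] with x hx
        rw [hRx x, hPmid x hx.1.le hx.2]
      have hne_m : ∀ᵐ x : ℝ, x ≠ m := by
        have hm1 : volume ({m} : Set ℝ) = 0 := measure_singleton m
        rw [ae_iff]
        convert hm1 using 2
        ext x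
        simp
      have hIum : (∫ s in u..m, R s * (g s - 1) * lam s) = P u * ∫ s in u..m, E s * h s := by
        rw [← intervalIntegral.integral_const_mul]
        refine intervalIntegral.integral_congr_ae ?_
        filter_upwards [hne_m] with x hxm hxI
        rw [uIoc_of_le hum.le] at hxI
        rw [hRx x, hPmid x hxI.1.le (lt_of_le_of_ne hxI.2 hxm)]
        simp only [hh]
        ring
      have hEum := hftc u m hum.le
      have hllRm' : Function.leftLim R m
          = R u - ∫ s in u..m, R s * (g s - 1) * lam s := by
        rw [hllRm, hIum, hRx u]
        linear_combination (P u) * hEum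
      have hRm : R m = Function.leftLim R m * g m := by
        rw [hRx m, hPm_split, hllRm]
        ring
      have hadd1 := intervalIntegral.integral_add_adjacent_intervals
        (hR_II 0 u) (hR_II u m) (f := fun s => R s * (g s - 1) * lam s) (μ := volume)
      have hsum_split : (∑ s ∈ J, Function.leftLim R s * (g s - 1))
          = (∑ s ∈ K, Function.leftLim R s * (g s - 1))
            + Function.leftLim R m * (g m - 1) := by
        rw [hKdef, Finset.sum_erase_add J _ hmJ]
      have hRm_eq : R m = 1 + (∑ s ∈ J, Function.leftLim R s * (g s - 1))
          - ∫ s in (0:ℝ)..m, R s * (g s - 1) * lam s := by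
        have h1 : R m = Function.leftLim R m + Function.leftLim R m * (g m - 1) := by
          rw [hRm]; ring
        rw [h1]
        linarith [hadd1, hsum_split, hIH, hllRm']
      have hImt : (∫ s in m..t, R s * (g s - 1) * lam s) = P m * ∫ s in m..t, E s * h s := by
        rw [← intervalIntegral.integral_const_mul]
        refine intervalIntegral.integral_congr (fun x hx => ?_)
        rw [uIcc_of_le hmt] at hx
        rw [hRx x, hPtop x hx.1 hx.2]
        simp only [hh]
        ring
      have hEmt := hftc m t hmt
      have hRt_from_m : R t = R m - ∫ s in m..t, R s * (g s - 1) * lam s := by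
        rw [hRx t, hRx m, hPtop t hmt le_rfl, hImt]
        linear_combination (P m) * hEmt
      have hadd2 := intervalIntegral.integral_add_adjacent_intervals
        (hR_II 0 m) (hR_II m t) (f := fun s => R s * (g s - 1) * lam s) (μ := volume)
      rw [hRt_from_m, hRm_eq]
      linarith [hadd2]
  have part4 : ∀ t, 0 ≤ t →
      R t = 1 + (∫ s in Set.Ioc (0:ℝ) t, Function.leftLim R s * (g s - 1) ∂N.measure)
        - ∫ s in (0:ℝ)..t, R s * (g s - 1) * lam s := by
    intro t ht
    rw [integral_dN N hN_nat hN_jump hN_fin ht]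
    exact hmain _ t ht rfl
  refine ⟨⟨part1, part2, part3, part4⟩, ?_⟩
  -- UNIQUENESS
  intro R₁ R₂ hsol1 hsol2 t₀ ht₀
  obtain ⟨-, hs1b, hs1c, hs1d⟩ := hsol1
  obtain ⟨-, hs2b, hs2c, hs2d⟩ := hsol2
  have hne_pt : ∀ c : ℝ, ∀ᵐ x : ℝ, x ≠ c := by
    intro c
    have hm1 : volume ({c} : Set ℝ) = 0 := measure_singleton c
    rw [ae_iff]
    convert hm1 using 2
    ext x
    simp
  have hsum1 : ∀ t, 0 ≤ t → R₁ t = 1 + (∑ s ∈ (hN_fin t).toFinset,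
      Function.leftLim R₁ s * (g s - 1)) - ∫ s in (0:ℝ)..t, R₁ s * (g s - 1) * lam s := by
    intro t ht
    have := hs1d t ht
    rwa [integral_dN N hN_nat hN_jump hN_fin ht] at this
  have hsum2 : ∀ t, 0 ≤ t → R₂ t = 1 + (∑ s ∈ (hN_fin t).toFinset,
      Function.leftLim R₂ s * (g s - 1)) - ∫ s in (0:ℝ)..t, R₂ s * (g s - 1) * lam s := by
    intro t ht
    have := hs2d t ht
    rwa [integral_dN N hN_nat hN_jump hN_fin ht] at this
  by_contra hne
  -- boundedness of solutions on [0, t₀]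
  have hbd : ∀ (Rf : ℝ → ℝ),
      (∀ t, 0 ≤ t → IntervalIntegrable (fun s => Rf s * (g s - 1) * lam s) volume 0 t) →
      (∀ t, 0 ≤ t → Rf t = 1 + (∑ s ∈ (hN_fin t).toFinset,
        Function.leftLim Rf s * (g s - 1)) - ∫ s in (0:ℝ)..t, Rf s * (g s - 1) * lam s) →
      ∃ B, ∀ s, 0 ≤ s → s ≤ t₀ → |Rf s| ≤ B := by
    intro Rf hint heq
    refine ⟨1 + (∑ s ∈ (hN_fin t₀).toFinset, |Function.leftLim Rf s * (g s - 1)|)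
      + ∫ s in (0:ℝ)..t₀, |Rf s * (g s - 1) * lam s|, ?_⟩
    intro s hs0 hst
    rw [heq s hs0]
    have h1 : |∑ x ∈ (hN_fin s).toFinset, Function.leftLim Rf x * (g x - 1)|
        ≤ ∑ x ∈ (hN_fin t₀).toFinset, |Function.leftLim Rf x * (g x - 1)| :=
      le_trans (Finset.abs_sum_le_sum_abs _ _)
        (Finset.sum_le_sum_of_subset_of_nonneg (hJsub hst) (fun i _ _ => abs_nonneg _))
    have h2 : |∫ x in (0:ℝ)..s, Rf x * (g x - 1) * lam x|
        ≤ ∫ x in (0:ℝ)..t₀, |Rf x * (g x - 1) * lam x| := by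
      refine le_trans (intervalIntegral.abs_integral_le_integral_abs hs0) ?_
      refine intervalIntegral.integral_mono_interval le_rfl hs0 hst
        (Eventually.of_forall (fun x => abs_nonneg _)) ((hint t₀ ht₀).abs)
    set A := ∑ x ∈ (hN_fin s).toFinset, Function.leftLim Rf x * (g x - 1)
    set I := ∫ x in (0:ℝ)..s, Rf x * (g x - 1) * lam x
    have e1 := abs_sub (1 + A) I
    have e2 := abs_add_le (1:ℝ) A
    rw [abs_one] at e2
    linarith
  obtain ⟨B₁, hB₁⟩ := hbd R₁ hs1c hsum1
  obtain ⟨B₂, hB₂⟩ := hbd R₂ hs2c hsum2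
  set B := B₁ + B₂ with hBdef
  have hDbd : ∀ s, 0 ≤ s → s ≤ t₀ → |R₁ s - R₂ s| ≤ B := fun s h1 h2 =>
    le_trans (abs_sub _ _) (add_le_add (hB₁ s h1 h2) (hB₂ s h1 h2))
  have hB0 : 0 ≤ B := le_trans (abs_nonneg _) (hDbd 0 le_rfl ht₀)
  have hDint : ∀ a b : ℝ, 0 ≤ a → 0 ≤ b →
      IntervalIntegrable (fun s => (R₁ s - R₂ s) * (g s - 1) * lam s) volume a b := by
    intro a b ha hb
    have e1 := ((hs1c a ha).symm.trans (hs1c b hb))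
    have e2 := ((hs2c a ha).symm.trans (hs2c b hb))
    have e3 : (fun s => (R₁ s - R₂ s) * (g s - 1) * lam s)
        = fun s => R₁ s * (g s - 1) * lam s - R₂ s * (g s - 1) * lam s := by
      funext s; ring
    rw [e3]
    exact e1.sub e2
  have hDeq : ∀ t, 0 ≤ t → R₁ t - R₂ t
      = (∑ s ∈ (hN_fin t).toFinset,
          (Function.leftLim R₁ s - Function.leftLim R₂ s) * (g s - 1))
        - ∫ s in (0:ℝ)..t, (R₁ s - R₂ s) * (g s - 1) * lam s := by
    intro t ht
    have e1 := hsum1 t ht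
    have e2 := hsum2 t ht
    have e3 : (∫ s in (0:ℝ)..t, (R₁ s - R₂ s) * (g s - 1) * lam s)
        = (∫ s in (0:ℝ)..t, R₁ s * (g s - 1) * lam s)
          - ∫ s in (0:ℝ)..t, R₂ s * (g s - 1) * lam s := by
      rw [← intervalIntegral.integral_sub (hs1c t ht) (hs2c t ht)]
      exact intervalIntegral.integral_congr (fun x _ => by ring)
    have e4 : (∑ s ∈ (hN_fin t).toFinset,
          (Function.leftLim R₁ s - Function.leftLim R₂ s) * (g s - 1))
        = (∑ s ∈ (hN_fin t).toFinset, Function.leftLim R₁ s * (g s - 1))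
          - (∑ s ∈ (hN_fin t).toFinset, Function.leftLim R₂ s * (g s - 1)) := by
      rw [← Finset.sum_sub_distrib]
      exact Finset.sum_congr rfl (fun s _ => by ring)
    rw [e3, e4]
    linarith
  set Z : Set ℝ := {s | s ∈ Icc 0 t₀ ∧ R₁ s ≠ R₂ s} with hZ
  have hZne : Z.Nonempty := ⟨t₀, ⟨ht₀, le_rfl⟩, hne⟩
  have hZbdd : BddBelow Z := ⟨0, fun s hs => hs.1.1⟩
  set u := sInf Z with hu
  have hu0 : 0 ≤ u := le_csInf hZne (fun s hs => hs.1.1)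
  have huT : u ≤ t₀ := csInf_le hZbdd ⟨⟨ht₀, le_rfl⟩, hne⟩
  have hDzero : ∀ s, 0 ≤ s → s < u → R₁ s = R₂ s := by
    intro s h1 h2
    by_contra hne'
    exact absurd (csInf_le hZbdd ⟨⟨h1, le_trans h2.le huT⟩, hne'⟩) (not_le.2 h2)
  have hlleq_lt : ∀ s, 0 < s → s < u →
      Function.leftLim R₁ s = Function.leftLim R₂ s := by
    intro s h1 h2
    refine leftLim_congr ?_ (hDzero s h1.le h2)
    filter_upwards [Ioo_mem_nhdsLT_of_mem (⟨h1, le_rfl⟩ : s ∈ Ioc 0 s)] with x hx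
    exact hDzero x hx.1.le (lt_trans hx.2 h2)
  have hIzero : ∀ v, 0 ≤ v → v ≤ u →
      (∫ s in (0:ℝ)..v, (R₁ s - R₂ s) * (g s - 1) * lam s) = 0 := by
    intro v hv0 hvu
    rw [intervalIntegral.integral_of_le hv0]
    refine MeasureTheory.integral_eq_zero_of_ae ?_
    filter_upwards [ae_restrict_mem measurableSet_Ioc, ae_restrict_of_ae (hne_pt v)]
      with x hx hxv
    have hxu : x < u := lt_of_lt_of_le (lt_of_le_of_ne hx.2 hxv) hvu
    have := hDzero x hx.1.le hxu
    simp [this]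
  have hlleq_u : ∀ s ∈ (hN_fin u).toFinset,
      Function.leftLim R₁ s = Function.leftLim R₂ s := by
    intro s hs
    obtain ⟨hs0, hsu, hsjump⟩ := (hN_fin u).mem_toFinset.1 hs
    rcases lt_or_eq_of_le hsu with hlt | heq
    · exact hlleq_lt s hs0 hlt
    · set J' := (hN_fin s).toFinset.erase s with hJ'def
      have hJ'lt : ∀ x ∈ J', x < s := by
        intro x hx
        obtain ⟨hxne, hxJ⟩ := Finset.mem_erase.1 hx
        exact lt_of_le_of_ne ((hN_fin s).mem_toFinset.1 hxJ).2.1 hxne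
      set w : ℝ := if hJ'ne : J'.Nonempty then (J'.max' hJ'ne + s)/2 else s/2 with hwdef
      have hw0 : 0 ≤ w := by
        rw [hwdef]; split_ifs with hJ'ne
        · have h1 := ((hN_fin s).mem_toFinset.1 (Finset.mem_of_mem_erase (J'.max'_mem hJ'ne))).1
          linarith
        · linarith
      have hws : w < s := by
        rw [hwdef]; split_ifs with hJ'ne
        · have := hJ'lt _ (J'.max'_mem hJ'ne); linarith
        · linarith
      have hwU : ∀ x ∈ J', x ≤ w := by
        intro x hx
        rw [hwdef]; split_ifs with hJ'ne
        · have h1 := Finset.le_max' J' x hx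
          have h2 := hJ'lt _ (J'.max'_mem hJ'ne)
          linarith
        · exact absurd ⟨x, hx⟩ hJ'ne
      have hJ'x : ∀ x, w ≤ x → x < s → (hN_fin x).toFinset = J' := by
        intro x h1 h2
        ext r
        rw [(hN_fin x).mem_toFinset, hJ'def, Finset.mem_erase, (hN_fin s).mem_toFinset]
        constructor
        · rintro ⟨a1, a2, a3⟩
          exact ⟨ne_of_lt (lt_of_le_of_lt a2 h2), a1, le_trans a2 h2.le, a3⟩
        · rintro ⟨a0, a1, a2, a3⟩
          refine ⟨a1, ?_, a3⟩
          have : r ∈ J' := Finset.mem_erase.2 ⟨a0, (hN_fin s).mem_toFinset.2 ⟨a1, a2, a3⟩⟩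
          exact le_trans (hwU r this) h1
      have hssub : s ∈ Icc (0:ℝ) t₀ := ⟨hs0.le, le_trans hsu huT⟩
      have hll : ∀ (Rf : ℝ → ℝ),
          (∀ t, 0 ≤ t → IntervalIntegrable (fun r => Rf r * (g r - 1) * lam r) volume 0 t) →
          (∀ t, 0 ≤ t → Rf t = 1 + (∑ r ∈ (hN_fin t).toFinset,
            Function.leftLim Rf r * (g r - 1)) - ∫ r in (0:ℝ)..t, Rf r * (g r - 1) * lam r) →
          Function.leftLim Rf s = (1 + ∑ r ∈ J', Function.leftLim Rf r * (g r - 1))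
            - ∫ r in Ioc (0:ℝ) s, Rf r * (g r - 1) * lam r := by
        intro Rf hint heq
        have hcont : ContinuousOn (fun x => ∫ r in Ioc (0:ℝ) x, Rf r * (g r - 1) * lam r)
            (Icc 0 t₀) :=
          intervalIntegral.continuousOn_primitive
            (((hint t₀ ht₀).1).congr_set_ae Ioc_ae_eq_Icc.symm)
        have hmem : Icc (0:ℝ) t₀ ∈ 𝓝[<] s := by
          refine mem_of_superset
            (Ioo_mem_nhdsLT_of_mem (⟨hws, le_rfl⟩ : s ∈ Ioc w s)) ?_
          intro x hx
          exact ⟨le_trans hw0 hx.1.le, le_trans hx.2.le (le_trans hsu huT)⟩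
        have htend : Tendsto (fun x => ∫ r in Ioc (0:ℝ) x, Rf r * (g r - 1) * lam r)
            (𝓝[<] s) (𝓝 (∫ r in Ioc (0:ℝ) s, Rf r * (g r - 1) * lam r)) :=
          (hcont s hssub).mono_left (nhdsWithin_le_of_mem hmem)
        refine leftLim_eq_of_tendsto ?_
        refine Tendsto.congr' ?_ ((tendsto_const_nhds (α := ℝ)).sub htend)
        filter_upwards [Ioo_mem_nhdsLT_of_mem (⟨hws, le_rfl⟩ : s ∈ Ioc w s)] with x hx
        have hx0 : 0 ≤ x := le_trans hw0 hx.1.le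
        rw [heq x hx0, hJ'x x hx.1.le hx.2, intervalIntegral.integral_of_le hx0]
      have hll1 := hll R₁ hs1c hsum1
      have hll2 := hll R₂ hs2c hsum2
      have hC12 : (∑ x ∈ J', Function.leftLim R₁ x * (g x - 1))
          = ∑ x ∈ J', Function.leftLim R₂ x * (g x - 1) := by
        refine Finset.sum_congr rfl (fun x hx => ?_)
        obtain ⟨hxne, hxJ⟩ := Finset.mem_erase.1 hx
        obtain ⟨hx0, hxu, _⟩ := (hN_fin s).mem_toFinset.1 hxJ
        rw [hlleq_lt x hx0 ((lt_of_le_of_ne hxu hxne).trans_le heq.le)]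
      have hL12 : (∫ r in Ioc (0:ℝ) s, R₁ r * (g r - 1) * lam r)
          = ∫ r in Ioc (0:ℝ) s, R₂ r * (g r - 1) * lam r := by
        refine integral_congr_ae ?_
        filter_upwards [ae_restrict_mem measurableSet_Ioc, ae_restrict_of_ae (hne_pt s)]
          with x hx hxs
        rw [hDzero x hx.1.le ((lt_of_le_of_ne hx.2 hxs).trans_le heq.le)]
      rw [hll1, hll2, hC12, hL12]
  have hDu : R₁ u = R₂ u := by
    have hd := hDeq u hu0
    have hS : (∑ s ∈ (hN_fin u).toFinset,
        (Function.leftLim R₁ s - Function.leftLim R₂ s) * (g s - 1)) = 0 :=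
      Finset.sum_eq_zero (fun s hs => by rw [hlleq_u s hs]; ring)
    rw [hS, hIzero u hu0 le_rfl] at hd
    linarith
  have huT' : u < t₀ := by
    rcases lt_or_eq_of_le huT with hlt | heq
    · exact hlt
    · exact absurd (heq ▸ hDu) hne
  obtain ⟨δ₁, hδ₁0, hδ₁T, hδ₁nj⟩ := exists_gap N hN_fin hu0 huT'
  have hΦcont : Continuous (fun x => ∫ r in u..x, |h r|) :=
    intervalIntegral.continuous_primitive (fun a b => (h_II a b).abs) u
  obtain ⟨δ₂, hδ₂0, hδ₂⟩ := Metric.continuousAt_iff.1 (hΦcont.continuousAt (x := u))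
    (1/2) (by norm_num)
  set δ := min δ₁ (δ₂/2) with hδdef
  have hδ0 : 0 < δ := lt_min hδ₁0 (by linarith)
  have hδδ₁ : δ ≤ δ₁ := min_le_left _ _
  set α := ∫ r in u..(u+δ), |h r| with hαdef
  have hα : α ≤ 1/2 := by
    have hd : dist (u+δ) u < δ₂ := by
      rw [Real.dist_eq]
      have := min_le_right δ₁ (δ₂/2)
      rw [abs_of_nonneg (by linarith : (0:ℝ) ≤ u + δ - u)]
      linarith
    have h2 := hδ₂ hd
    rw [Real.dist_eq, intervalIntegral.integral_same, sub_zero] at h2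
    exact le_of_lt (lt_of_le_of_lt (le_abs_self _) h2)
  have hα0 : 0 ≤ α :=
    intervalIntegral.integral_nonneg (by linarith) (fun x _ => abs_nonneg _)
  have hJx_eq : ∀ x, u ≤ x → x ≤ u + δ →
      (hN_fin x).toFinset = (hN_fin u).toFinset := by
    intro x h1 h2
    exact toFinset_jump_eq N h1 _ _ (fun r hr1 hr2 => hδ₁nj r hr1 (by linarith))
  have hiter : ∀ k : ℕ, ∀ x, u < x → x ≤ u + δ → |R₁ x - R₂ x| ≤ B * (1/2)^k := by
    intro k
    induction k with
    | zero =>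
      intro x h1 h2
      simpa using hDbd x (le_trans hu0 h1.le) (by linarith)
    | succ k ihk =>
      intro x h1 h2
      have hx0 : 0 ≤ x := le_trans hu0 h1.le
      have hDx := hDeq x hx0
      have hS : (∑ s ∈ (hN_fin x).toFinset,
          (Function.leftLim R₁ s - Function.leftLim R₂ s) * (g s - 1)) = 0 := by
        rw [hJx_eq x h1.le h2]
        exact Finset.sum_eq_zero (fun s hs => by rw [hlleq_u s hs]; ring)
      rw [hS] at hDx
      have hsplit := intervalIntegral.integral_add_adjacent_intervals
        (hDint 0 u le_rfl hu0) (hDint u x hu0 hx0)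
      rw [← hsplit, hIzero u hu0 le_rfl, zero_add] at hDx
      have h4 : |R₁ x - R₂ x| ≤ ∫ s in u..x, |(R₁ s - R₂ s) * (g s - 1) * lam s| := by
        rw [hDx, zero_sub, abs_neg]
        exact intervalIntegral.abs_integral_le_integral_abs h1.le
      have h5 : (∫ s in u..x, |(R₁ s - R₂ s) * (g s - 1) * lam s|)
          ≤ ∫ s in u..x, (B * (1/2)^k) * |h s| := by
        refine intervalIntegral.integral_mono_on h1.le ((hDint u x hu0 hx0).abs)
          (((h_II u x).abs).const_mul _) ?_
        intro s hs
        have hDs : |R₁ s - R₂ s| ≤ B * (1/2)^k := by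
          rcases eq_or_lt_of_le hs.1 with heq | hlt
          · rw [← heq]
            simp only [hDu, sub_self, abs_zero]
            positivity
          · exact ihk s hlt (le_trans hs.2 h2)
        simp only [hh, abs_mul]
        rw [mul_assoc]
        refine mul_le_mul_of_nonneg_right hDs (by positivity)
      have h6 : (∫ s in u..x, (B * (1/2)^k) * |h s|)
          = (B * (1/2)^k) * ∫ s in u..x, |h s| :=
        intervalIntegral.integral_const_mul _ _
      have h7 : (∫ s in u..x, |h s|) ≤ α := by
        refine intervalIntegral.integral_mono_interval le_rfl h1.le (by linarith)
          (Eventually.of_forall (fun r => abs_nonneg _)) ((h_II u (u+δ)).abs)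
      have h8 : (B * (1/2)^k) * (∫ s in u..x, |h s|) ≤ (B * (1/2)^k) * (1/2) := by
        refine mul_le_mul_of_nonneg_left (le_trans h7 hα) (by positivity)
      calc |R₁ x - R₂ x| ≤ ∫ s in u..x, |(R₁ s - R₂ s) * (g s - 1) * lam s| := h4
        _ ≤ ∫ s in u..x, (B * (1/2)^k) * |h s| := h5
        _ = (B * (1/2)^k) * ∫ s in u..x, |h s| := h6
        _ ≤ (B * (1/2)^k) * (1/2) := h8
        _ = B * (1/2)^(k+1) := by ring
  obtain ⟨z, hzZ, hzlt⟩ := exists_lt_of_csInf_lt hZne (by linarith : u < u + δ)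
  have hzu : u ≤ z := csInf_le hZbdd hzZ
  have hzu' : u < z := by
    rcases lt_or_eq_of_le hzu with hlt | heq
    · exact hlt
    · exact absurd (heq ▸ hDu) hzZ.2
  have htd : Tendsto (fun k : ℕ => B * (1/2)^k) atTop (𝓝 0) := by
    have h1 : Tendsto (fun k : ℕ => ((1:ℝ)/2)^k) atTop (𝓝 0) :=
      tendsto_pow_atTop_nhds_zero_of_lt_one (by norm_num) (by norm_num)
    simpa using h1.const_mul B
  have hzero : |R₁ z - R₂ z| ≤ 0 :=
    ge_of_tendsto htd (Eventually.of_forall (fun k => hiter k z hzu' hzlt.le))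
  have hzeq : R₁ z = R₂ z := by
    have h1 := abs_nonneg (R₁ z - R₂ z)
    have h0 : R₁ z - R₂ z = 0 := abs_eq_zero.1 (le_antisymm hzero h1)
    linarith
  exact hzZ.2 hzeq
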